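/- (Lattice support condition for the exponential sums.) For every q ∈ ℕ and every c ∈ ℤ^{n+1}: if S_{q,L,λ}(c) ≠ 0, then there exists b ∈ ℤ such that c ≡ b·∇F(λ) (mod L), i.e. c lies in the lattice Γ_{λ,L} := { d ∈ ℤ^{n+1} : ∃ b ∈ ℤ, d ≡ b·∇F(λ) mod L }. -/

import Mathlib

open scoped BigOperators
open Finset Filter Topology Matrix

noncomputable section

namespace Quad

/-- The integral quadratic form `x ↦ xᵀ M_F x` where `N = 2·M_F` is an integer
symmetric matrix with even diagonal, so that the value `(xᵀ N x)/2` is an integer. -/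
def Fint {m : ℕ} (N : Matrix (Fin m) (Fin m) ℤ) (x : Fin m → ℤ) : ℤ :=
  (∑ i, ∑ j, N i j * x i * x j) / 2

/-- The corresponding real quadratic form `x ↦ xᵀ M_F x`, `N = 2·M_F`. -/
def FR {m : ℕ} (N : Matrix (Fin m) (Fin m) ℤ) (x : Fin m → ℝ) : ℝ :=
  (∑ i, ∑ j, (N i j : ℝ) * x i * x j) / 2

/-- The real quadratic form attached to a real matrix. -/
def QFR {m : ℕ} (A : Matrix (Fin m) (Fin m) ℝ) (x : Fin m → ℝ) : ℝ :=
  ∑ i, ∑ j, A i j * x i * x j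

/-- The gradient `∇F(x) = 2 M_F x = N x`. -/
def grad {m : ℕ} (N : Matrix (Fin m) (Fin m) ℤ) (x : Fin m → ℤ) : Fin m → ℤ :=
  fun i => ∑ j, N i j * x j

/-- `H_{λ,L}(y) = F(λ)/L + ∇F(λ)·y` (assuming `L ∣ F(λ)`). -/
def Hpoly {m : ℕ} (N : Matrix (Fin m) (Fin m) ℤ) (L : ℕ) (lam y : Fin m → ℤ) : ℤ :=
  Fint N lam / (L : ℤ) + ∑ i, grad N lam i * y i

/-- The additive character `e_q(t) = exp(2πit/q)`. -/
def eChar (q : ℕ) (t : ℝ) : ℂ := Complex.exp (2 * Real.pi * Complex.I * (t : ℂ) / (q : ℂ))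

/-- The dual form value `N_F(c) = cᵀ · adj(N) · c`, `N = 2 M_F`; this equals `2ⁿ F*(c)`. -/
def dualF {m : ℕ} (N : Matrix (Fin m) (Fin m) ℤ) (c : Fin m → ℤ) : ℤ :=
  ∑ i, ∑ j, N.adjugate i j * c i * c j

/-- The embedding sending the `i`-th of the `n-1` variables of `F₂` to coordinate `i+2`. -/
def emb {n : ℕ} (i : Fin (n-1)) : Fin (n+1) := ⟨i.val + 2, by have h := i.isLt; omega⟩

/-- The quadratic Gauss sum `ι_q = Σ_{x mod q} e_q(x²)`. -/
def iotaSum (q : ℕ) : ℂ := ∑ x ∈ Finset.range q, eChar q ((x : ℝ)^2)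

open Classical in
/-- The exponential sum `S_{q,L,λ}(c)`. -/
def Sq (n : ℕ) (N : Matrix (Fin (n+1)) (Fin (n+1)) ℤ) (q L : ℕ)
    (lam c : Fin (n+1) → ℤ) : ℂ :=
  ∑ a ∈ (Finset.range q).filter (fun a => Nat.gcd a q = 1),
    ∑ σ ∈ (Finset.univ : Finset (Fin (n+1) → Fin (q*L))).filter
        (fun σ => (L : ℤ) ∣ Hpoly N L lam (fun i => ((σ i : ℕ) : ℤ))),
      eChar (q*L)
        (((a : ℤ) * (Hpoly N L lam (fun i => ((σ i : ℕ) : ℤ))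
            + (L : ℤ) * Fint N (fun i => ((σ i : ℕ) : ℤ)))
          + ∑ i, c i * ((σ i : ℕ) : ℤ) : ℤ) : ℝ)

/-- The good-modulus factor `S⁽¹⁾_{q,L,λ}(c)` (for `q = q₁q₂`, `gcd(q₁,2LD) = 1`). -/
def S1 (n : ℕ) (N : Matrix (Fin (n+1)) (Fin (n+1)) ℤ) (q₁ q₂ L : ℕ) (k₁ : ℤ)
    (lam c : Fin (n+1) → ℤ) : ℂ :=
  ∑ σ : Fin (n+1) → Fin q₁,
    ∑ a ∈ (Finset.range q₁).filter (fun a => Nat.gcd a q₁ = 1),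
      eChar q₁
        (((a : ℤ) * (((q₂ : ℤ) * (L : ℤ))^2 * Fint N (fun i => ((σ i : ℕ) : ℤ))
              + (q₂ : ℤ) * ((∑ i, grad N lam i * ((σ i : ℕ) : ℤ)) + k₁))
          + ∑ i, c i * ((σ i : ℕ) : ℤ) : ℤ) : ℝ)

open Classical in
/-- The bad-modulus factor `S⁽²⁾_{q,L,λ}(c)`. -/
def S2 (n : ℕ) (N : Matrix (Fin (n+1)) (Fin (n+1)) ℤ) (q₁ q₂ L : ℕ) (k₂ : ℤ)
    (lam c : Fin (n+1) → ℤ) : ℂ :=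
  ∑ σ ∈ (Finset.univ : Finset (Fin (n+1) → Fin (q₂*L))).filter
      (fun σ => (L : ℤ) ∣ Hpoly N L lam (fun i => (q₁ : ℤ) * ((σ i : ℕ) : ℤ))),
    ∑ a ∈ (Finset.range q₂).filter (fun a => Nat.gcd a q₂ = 1),
      eChar (q₂*L)
        (((a : ℤ) * ((q₁ : ℤ)^2 * (L : ℤ) * Fint N (fun i => ((σ i : ℕ) : ℤ))
              + (q₁ : ℤ) * ((∑ i, grad N lam i * ((σ i : ℕ) : ℤ)) + k₂))
          + ∑ i, c i * ((σ i : ℕ) : ℤ) : ℤ) : ℝ)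

/-- The complete quadratic exponential sum `T_q(G,m;c)`. -/
def Tq (n : ℕ) (NG : Matrix (Fin (n+1)) (Fin (n+1)) ℤ) (q : ℕ) (m : ℤ)
    (c : Fin (n+1) → ℤ) : ℂ :=
  ∑ a ∈ (Finset.range q).filter (fun a => Nat.gcd a q = 1),
    ∑ b : Fin (n+1) → Fin q,
      eChar q (((a : ℤ) * (Fint NG (fun i => ((b i : ℕ) : ℤ)) - m)
        + ∑ i, c i * ((b i : ℕ) : ℤ) : ℤ) : ℝ)

/-- The counting function whose normalised limit is the local density
`σ_p(W;L,λ)`: the number of `v ∈ (ℤ/p^kℤ)^{n+1}` with `F(v) ≡ 0 mod p^k` and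
`v ≡ λ mod p^{ord_p L}`. -/
def localCount (n : ℕ) (N : Matrix (Fin (n+1)) (Fin (n+1)) ℤ) (L : ℕ)
    (lam : Fin (n+1) → ℤ) (p k : ℕ) : ℕ :=
  Nat.card {v : Fin (n+1) → Fin (p^k) //
    ((p : ℤ)^k ∣ Fint N (fun i => ((v i : ℕ) : ℤ))) ∧
    ∀ i, (p : ℤ)^(padicValNat p L) ∣ ((v i : ℕ) : ℤ) - lam i}

/-- The coordinates `t(x) = Mx` of an integer vector. -/
def tmap (n : ℕ) (M : Matrix (Fin (n+1)) (Fin (n+1)) ℝ) (x : Fin (n+1) → ℤ) :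
    Fin (n+1) → ℝ :=
  M.mulVec (fun i => (x i : ℝ))

/-- The counting function `N_W((R,ξ),(L,Γ);B)` for the affine cone. -/
def NW (n : ℕ) (N : Matrix (Fin (n+1)) (Fin (n+1)) ℤ)
    (M : Matrix (Fin (n+1)) (Fin (n+1)) ℝ) (a b : Fin (n+1) → ℝ)
    (B R : ℝ) (L : ℕ) (Γ : Fin (n+1) → ℤ) : ℕ :=
  Nat.card {x : Fin (n+1) → ℤ //
    x ≠ 0 ∧ Fint N x = 0 ∧ (∀ i, (L : ℤ) ∣ x i - Γ i) ∧
    tmap n M x 0 ≠ 0 ∧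
    (∀ j : Fin (n+1), 2 ≤ j.val →
      a j ≤ R * (tmap n M x j / tmap n M x 0) ∧ R * (tmap n M x j / tmap n M x 0) ≤ b j) ∧
    (∀ i, |tmap n M x i| ≤ B)}

/-- Twice the counting function `N_V((R,ξ),(L,Λ);B)` for the projective quadric:
the number of primitive integer vectors on the cone, in the real zoom region,
of height at most `B`, congruent mod `L` to a unit multiple of `Γ`. -/
def NV (n : ℕ) (N : Matrix (Fin (n+1)) (Fin (n+1)) ℤ)
    (M : Matrix (Fin (n+1)) (Fin (n+1)) ℝ) (a b : Fin (n+1) → ℝ)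
    (B R : ℝ) (L : ℕ) (Γ : Fin (n+1) → ℤ) : ℕ :=
  Nat.card {x : Fin (n+1) → ℤ //
    Finset.univ.gcd x = 1 ∧ Fint N x = 0 ∧
    tmap n M x 0 ≠ 0 ∧
    (∀ j : Fin (n+1), 2 ≤ j.val →
      a j ≤ R * (tmap n M x j / tmap n M x 0) ∧ R * (tmap n M x j / tmap n M x 0) ≤ b j) ∧
    (∀ i, |tmap n M x i| ≤ B) ∧
    (∃ γ : (ZMod L)ˣ, ∀ i, ((x i : ZMod L)) = (γ : ZMod L) * ((Γ i : ZMod L)))}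

/-- The value of the singular integral `I_R` for `R ≥ R₀`. -/
def IRval (n : ℕ) (M : Matrix (Fin (n+1)) (Fin (n+1)) ℝ) (a b : Fin (n+1) → ℝ)
    (R : ℝ) : ℝ :=
  2 * (∏ j ∈ Finset.univ.filter (fun j : Fin (n+1) => 2 ≤ j.val), (b j - a j))
    / (((n : ℝ) - 1) * |M.det| * R^(n-1))

/-- The error exponent factor `E_τ(B)`. -/
def Etau (n : ℕ) (τ B : ℝ) : ℝ :=
  if 5 ≤ n then B ^ (-(((n : ℝ) - 3) * τ / (5 * (n : ℝ) - 7)))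
  else B ^ (-(2 * τ / 17))

/-- The error factor `E_τ(1;B)` from the upper-bound range `-1 < τ < 1`. -/
def Etau1 (n : ℕ) (τ B : ℝ) : ℝ :=
  if 5 ≤ n then B ^ (-(((n : ℝ) - 3) * τ / 2))
  else B ^ (-τ) + B ^ (-((1 + τ)/4))

end Quad

namespace Quad

lemma two_pi_I_ne : (2:ℂ) * Real.pi * Complex.I ≠ 0 := by
  simp [Complex.I_ne_zero, Complex.ofReal_ne_zero, Real.pi_ne_zero]

lemma eChar_int_congr {q : ℕ} (hq : 0 < q) {s t : ℤ} (h : (q:ℤ) ∣ s - t) :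
    eChar q (s:ℝ) = eChar q (t:ℝ) := by
  obtain ⟨k, hk⟩ := h
  have hsk : s = t + q * k := by linarith
  have hq' : (q:ℂ) ≠ 0 := by exact_mod_cast hq.ne'
  unfold eChar
  rw [hsk]
  push_cast
  rw [show 2 * (Real.pi:ℂ) * Complex.I * ((t:ℂ) + q * k) / q
      = 2 * (Real.pi:ℂ) * Complex.I * t / q + k * (2 * Real.pi * Complex.I) by
    field_simp]
  rw [Complex.exp_add, Complex.exp_int_mul_two_pi_mul_I, mul_one]

lemma eChar_int_eq_one_iff {q : ℕ} (hq : 0 < q) (s : ℤ) :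
    eChar q (s:ℝ) = 1 ↔ (q:ℤ) ∣ s := by
  have hq' : (q:ℂ) ≠ 0 := by exact_mod_cast hq.ne'
  unfold eChar
  rw [Complex.exp_eq_one_iff]
  constructor
  · rintro ⟨k, hk⟩
    refine ⟨k, ?_⟩
    rw [show (2:ℂ) * Real.pi * Complex.I * (s:ℝ) / q
        = 2 * Real.pi * Complex.I * ((s:ℂ)/q) by push_cast; ring,
      show (k:ℂ) * (2 * Real.pi * Complex.I) = 2 * Real.pi * Complex.I * k by ring] at hk
    have h1 : (s:ℂ)/q = k := mul_left_cancel₀ two_pi_I_ne hk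
    have h2 : (s:ℂ) = (q:ℤ) * k := by rw [div_eq_iff hq'] at h1; rw [h1]; push_cast; ring
    exact_mod_cast h2
  · rintro ⟨k, rfl⟩
    refine ⟨k, ?_⟩
    push_cast
    field_simp

lemma eChar_int_add {q : ℕ} (s t : ℤ) :
    eChar q ((s + t : ℤ) : ℝ) = eChar q (s:ℝ) * eChar q (t:ℝ) := by
  unfold eChar
  rw [← Complex.exp_add]
  congr 1
  push_cast
  ring

lemma eChar_qmul {q L : ℕ} (hq : 0 < q) (s : ℤ) :
    eChar (q * L) ((q * s : ℤ) : ℝ) = eChar L (s : ℝ) := by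
  have hq' : (q:ℂ) ≠ 0 := by exact_mod_cast hq.ne'
  unfold eChar
  congr 1
  push_cast
  rw [mul_comm (q:ℂ) (L:ℂ)]
  rw [show 2 * (Real.pi:ℂ) * Complex.I * ((q:ℂ) * s) = ((2 * (Real.pi:ℂ) * Complex.I * s)) * q by ring]
  rw [mul_div_assoc, mul_comm (L:ℂ) (q:ℂ), ← div_div, mul_div_assoc]
  rw [div_self hq']
  ring

lemma even_quadSum {m : ℕ} (N : Matrix (Fin m) (Fin m) ℤ) (hNsym : N.IsSymm)
    (hNeven : ∀ i, Even (N i i)) (x : Fin m → ℤ) :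
    Even (∑ i, ∑ j, N i j * x i * x j) := by
  have hsym : ∀ i j, N j i = N i j := fun i j => (hNsym.apply j i).symm
  rw [Int.even_iff]
  have key : ((∑ i, ∑ j, N i j * x i * x j : ℤ) : ZMod 2) = 0 := by
    push_cast
    rw [← Finset.sum_product', Finset.univ_product_univ]
    classical
    rw [← Finset.sum_filter_add_sum_filter_not Finset.univ
      (fun p : Fin m × Fin m => p.1 = p.2)]
    have h1 : ∑ p ∈ Finset.univ.filter (fun p : Fin m × Fin m => p.1 = p.2),
        ((N p.1 p.2 : ZMod 2) * (x p.1 : ZMod 2) * (x p.2 : ZMod 2)) = 0 := by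
      apply Finset.sum_eq_zero
      intro p hp
      simp only [Finset.mem_filter] at hp
      have : (N p.1 p.2 : ZMod 2) = 0 := by
        rw [hp.2]
        obtain ⟨k, hk⟩ := hNeven p.2
        rw [ZMod.intCast_zmod_eq_zero_iff_dvd]
        exact ⟨k, by omega⟩
      simp [this]
    have h2 : ∑ p ∈ Finset.univ.filter (fun p : Fin m × Fin m => ¬ p.1 = p.2),
        ((N p.1 p.2 : ZMod 2) * (x p.1 : ZMod 2) * (x p.2 : ZMod 2)) = 0 := by
      apply Finset.sum_involution (fun p _ => (p.2, p.1))
      · intro p _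
        rw [hsym p.1 p.2]
        ring_nf
        rw [show ((N p.1 p.2 : ZMod 2) * (x p.1 : ZMod 2) * (x p.2 : ZMod 2)) * 2 = 0 by
          rw [show (2 : ZMod 2) = 0 by rfl]; ring]
      · intro p hp _
        simp only [Finset.mem_filter] at hp
        intro h
        exact hp.2 (congrArg Prod.snd h)
      · intro p hp
        simp only [Finset.mem_filter] at hp ⊢
        exact ⟨Finset.mem_univ _, fun h => hp.2 h.symm⟩
      · intro p _; rfl
    rw [h1, h2, add_zero]
  have := (ZMod.intCast_zmod_eq_zero_iff_dvd (∑ i, ∑ j, N i j * x i * x j) 2).mp key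
  omega

lemma two_mul_Fint {m : ℕ} (N : Matrix (Fin m) (Fin m) ℤ) (hNsym : N.IsSymm)
    (hNeven : ∀ i, Even (N i i)) (x : Fin m → ℤ) :
    2 * Fint N x = ∑ i, ∑ j, N i j * x i * x j := by
  obtain ⟨k, hk⟩ := even_quadSum N hNsym hNeven x
  rw [Fint, hk]
  omega

lemma Fint_add {m : ℕ} (N : Matrix (Fin m) (Fin m) ℤ) (hNsym : N.IsSymm)
    (hNeven : ∀ i, Even (N i i)) (x y : Fin m → ℤ) :
    Fint N (fun i => x i + y i)
      = Fint N x + (∑ i, ∑ j, N i j * x i * y j) + Fint N y := by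
  have h2 : (2:ℤ) ≠ 0 := two_ne_zero
  apply mul_left_cancel₀ h2
  rw [mul_add, mul_add, two_mul_Fint N hNsym hNeven, two_mul_Fint N hNsym hNeven,
    two_mul_Fint N hNsym hNeven]
  have hyx : (∑ i, ∑ j, N i j * y i * x j) = ∑ i, ∑ j, N i j * x i * y j := by
    rw [Finset.sum_comm]
    apply Finset.sum_congr rfl; intro j _
    apply Finset.sum_congr rfl; intro i _
    rw [(hNsym.apply j i).symm]
    ring
  calc ∑ i, ∑ j, N i j * (x i + y i) * (x j + y j)
      = ∑ i, ∑ j, (N i j * x i * x j + (N i j * x i * y j + N i j * y i * x j)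
          + N i j * y i * y j) := by
        apply Finset.sum_congr rfl; intro i _
        apply Finset.sum_congr rfl; intro j _
        ring
    _ = (∑ i, ∑ j, N i j * x i * x j)
        + ((∑ i, ∑ j, N i j * x i * y j) + (∑ i, ∑ j, N i j * y i * x j))
        + ∑ i, ∑ j, N i j * y i * y j := by
        simp [Finset.sum_add_distrib]
    _ = _ := by rw [hyx]; ring

lemma Fint_smul {m : ℕ} (N : Matrix (Fin m) (Fin m) ℤ) (hNsym : N.IsSymm)
    (hNeven : ∀ i, Even (N i i)) (k : ℤ) (x : Fin m → ℤ) :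
    Fint N (fun i => k * x i) = k^2 * Fint N x := by
  have h2 : (2:ℤ) ≠ 0 := two_ne_zero
  apply mul_left_cancel₀ h2
  rw [two_mul_Fint N hNsym hNeven, show 2 * (k^2 * Fint N x) = k^2 * (2 * Fint N x) by ring,
    two_mul_Fint N hNsym hNeven, Finset.mul_sum]
  apply Finset.sum_congr rfl; intro i _
  rw [Finset.mul_sum]
  apply Finset.sum_congr rfl; intro j _
  ring

lemma lattice_of_orth {m L : ℕ} (hL : 0 < L) (g c : Fin m → ℤ)
    (P : ∀ t : Fin m → ℤ, (L:ℤ) ∣ (∑ i, g i * t i) → (L:ℤ) ∣ (∑ i, c i * t i)) :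
    ∃ b : ℤ, ∀ i, (L:ℤ) ∣ (c i - b * g i) := by
  classical
  set v : Option (Fin m) → ℤ := fun o => o.elim (L:ℤ) g with hv
  set I : Ideal ℤ := Ideal.span (Set.range v) with hI
  set d : ℤ := Submodule.IsPrincipal.generator I with hd
  have hdmem : d ∈ I := Submodule.IsPrincipal.generator_mem I
  have hspan : Ideal.span {d} = I := Submodule.IsPrincipal.span_singleton_generator I
  have hdvd : ∀ z ∈ I, d ∣ z := by
    intro z hz
    rw [← hspan, Ideal.mem_span_singleton] at hz
    exact hz
  have hdL : d ∣ (L:ℤ) := hdvd _ (Ideal.subset_span ⟨none, rfl⟩)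
  have hdg : ∀ i, d ∣ g i := fun i => hdvd _ (Ideal.subset_span ⟨some i, rfl⟩)
  have hd0 : d ≠ 0 := by
    rintro h
    obtain ⟨k, hk⟩ := hdL
    rw [h] at hk
    simp at hk
    omega
  rw [hI, Ideal.span, Submodule.mem_span_range_iff_exists_fun] at hdmem
  obtain ⟨w, hw⟩ := hdmem
  rw [Fintype.sum_option] at hw
  set u : ℤ := w none with hu
  set y : Fin m → ℤ := fun i => w (some i) with hy
  have hgy : ∑ i, g i * y i = d - u * (L:ℤ) := by
    have : u * (L:ℤ) + ∑ i, g i * y i = d := by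
      rw [← hw]; simp [hv, hy, hu, mul_comm]
    linarith
  obtain ⟨e, he⟩ := hdL
  have he0 : e ≠ 0 := by
    rintro rfl; simp at he; omega
  have ht₀ : (L:ℤ) ∣ ∑ i, g i * (e * y i) := by
    have : ∑ i, g i * (e * y i) = e * ∑ i, g i * y i := by
      rw [Finset.mul_sum]; apply Finset.sum_congr rfl; intros; ring
    rw [this, hgy]
    exact ⟨1 - e * u, by rw [he]; ring⟩
  have hc₀ := P _ ht₀
  have hc₀' : ∑ i, c i * (e * y i) = e * ∑ i, c i * y i := by
    rw [Finset.mul_sum]; apply Finset.sum_congr rfl; intros; ring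
  rw [hc₀'] at hc₀
  obtain ⟨k, hk⟩ := hc₀
  have hcy : ∑ i, c i * y i = d * k := by
    have h1 : e * ∑ i, c i * y i = e * (d * k) := by rw [hk, he]; ring
    exact mul_left_cancel₀ he0 h1
  refine ⟨k, fun i => ?_⟩
  obtain ⟨s, hs⟩ := hdg i
  set t : Fin m → ℤ := fun j => (if j = i then 1 else 0) - s * y j with htdef
  have hgt : ∑ j, g j * t j = g i - s * ∑ j, g j * y j := by
    simp only [htdef, mul_sub, Finset.sum_sub_distrib, mul_ite, mul_one, mul_zero,
      Finset.sum_ite_eq', Finset.mem_univ, if_true]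
    rw [Finset.mul_sum]
    congr 1
    apply Finset.sum_congr rfl; intros; ring
  have hct : ∑ j, c j * t j = c i - s * ∑ j, c j * y j := by
    simp only [htdef, mul_sub, Finset.sum_sub_distrib, mul_ite, mul_one, mul_zero,
      Finset.sum_ite_eq', Finset.mem_univ, if_true]
    rw [Finset.mul_sum]
    congr 1
    apply Finset.sum_congr rfl; intros; ring
  have hPt : (L:ℤ) ∣ ∑ j, g j * t j := by
    rw [hgt, hgy, hs]
    exact ⟨s * u, by ring⟩
  have hfin := P _ hPt
  rw [hct, hcy] at hfin
  have hfinal : c i - k * g i = c i - s * (d * k) := by rw [hs]; ring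
  rw [hfinal]
  exact hfin

lemma Hpoly_shift {m : ℕ} (N : Matrix (Fin m) (Fin m) ℤ) (L : ℕ) (lam x w : Fin m → ℤ) :
    Hpoly N L lam (fun i => x i + w i) = Hpoly N L lam x + ∑ i, grad N lam i * w i := by
  unfold Hpoly
  rw [show ∑ i, grad N lam i * (x i + w i)
      = ∑ i, (grad N lam i * x i + grad N lam i * w i) from
    Finset.sum_congr rfl (fun i _ => by ring), Finset.sum_add_distrib]
  ring

/-- Auxiliary: the exponent appearing in `Sq`. -/
def Eexp {m : ℕ} (N : Matrix (Fin m) (Fin m) ℤ) (L : ℕ) (a : ℤ) (lam c x : Fin m → ℤ) : ℤ :=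
  a * (Hpoly N L lam x + (L:ℤ) * Fint N x) + ∑ i, c i * x i

lemma Eexp_shift {m : ℕ} (N : Matrix (Fin m) (Fin m) ℤ) (hNsym : N.IsSymm)
    (hNeven : ∀ i, Even (N i i)) (L : ℕ) (a : ℤ) (lam c x w : Fin m → ℤ) :
    Eexp N L a lam c (fun i => x i + w i)
      = Eexp N L a lam c x
        + (a * ((∑ i, grad N lam i * w i)
            + (L:ℤ) * ((∑ i, ∑ j, N i j * x i * w j) + Fint N w))
          + ∑ i, c i * w i) := by
  unfold Eexp
  rw [Hpoly_shift, Fint_add N hNsym hNeven,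
    show ∑ i, c i * (x i + w i) = ∑ i, (c i * x i + c i * w i) from
      Finset.sum_congr rfl (fun i _ => by ring), Finset.sum_add_distrib]
  ring

lemma Eexp_congr {m : ℕ} (N : Matrix (Fin m) (Fin m) ℤ) (hNsym : N.IsSymm)
    (hNeven : ∀ i, Even (N i i)) (L Q : ℕ) (hLQ : (L:ℤ) ∣ (Q:ℤ)) (a : ℤ)
    (lam c x y : Fin m → ℤ) (hxy : ∀ i, (Q:ℤ) ∣ y i - x i) :
    (((L:ℤ) ∣ Hpoly N L lam y ↔ (L:ℤ) ∣ Hpoly N L lam x))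
      ∧ (Q:ℤ) ∣ (Eexp N L a lam c y - Eexp N L a lam c x) := by
  set w : Fin m → ℤ := fun i => y i - x i with hwdef
  have hy : y = fun i => x i + w i := by funext i; simp [hwdef]
  have hQw : ∀ i, (Q:ℤ) ∣ w i := hxy
  choose u hu using hQw
  have hgw : (Q:ℤ) ∣ ∑ i, grad N lam i * w i :=
    Finset.dvd_sum (fun i _ => ⟨grad N lam i * u i, by rw [hu i]; ring⟩)
  constructor
  · rw [hy, Hpoly_shift]
    exact dvd_add_left (dvd_trans hLQ hgw)
  · rw [hy, Eexp_shift N hNsym hNeven]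
    simp only [add_sub_cancel_left]
    have hB : (Q:ℤ) ∣ ∑ i, ∑ j, N i j * x i * w j :=
      Finset.dvd_sum (fun i _ => Finset.dvd_sum (fun j _ => ⟨N i j * x i * u j, by rw [hu j]; ring⟩))
    have hw' : w = fun i => (Q:ℤ) * u i := funext hu
    have hFw : (Q:ℤ) ∣ Fint N w := by
      rw [hw', Fint_smul N hNsym hNeven]
      exact ⟨(Q:ℤ) * Fint N u, by ring⟩
    have hcw : (Q:ℤ) ∣ ∑ i, c i * w i :=
      Finset.dvd_sum (fun i _ => ⟨c i * u i, by rw [hu i]; ring⟩)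
    exact dvd_add (Dvd.dvd.mul_left (dvd_add hgw (Dvd.dvd.mul_left (dvd_add hB hFw) _)) _) hcw

lemma Eexp_qt {m : ℕ} (N : Matrix (Fin m) (Fin m) ℤ) (hNsym : N.IsSymm)
    (hNeven : ∀ i, Even (N i i)) (L q : ℕ) (hq : 0 < q) (hL : 0 < L) (a : ℤ)
    (lam c x t : Fin m → ℤ) (hgt : (L:ℤ) ∣ ∑ i, grad N lam i * t i) :
    (((L:ℤ) ∣ Hpoly N L lam (fun i => x i + (q:ℤ) * t i)) ↔ (L:ℤ) ∣ Hpoly N L lam x)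
      ∧ eChar (q*L) ((Eexp N L a lam c (fun i => x i + (q:ℤ) * t i) : ℤ) : ℝ)
          = eChar L ((∑ i, c i * t i : ℤ) : ℝ)
            * eChar (q*L) ((Eexp N L a lam c x : ℤ) : ℝ) := by
  have hgqt : ∑ i, grad N lam i * ((q:ℤ) * t i) = (q:ℤ) * ∑ i, grad N lam i * t i := by
    rw [Finset.mul_sum]; apply Finset.sum_congr rfl; intros; ring
  constructor
  · rw [show Hpoly N L lam (fun i => x i + (q:ℤ) * t i)
        = Hpoly N L lam x + ∑ i, grad N lam i * ((q:ℤ) * t i) from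
      Hpoly_shift N L lam x (fun i => (q:ℤ) * t i)]
    refine dvd_add_left ?_
    rw [hgqt]
    exact Dvd.dvd.mul_left hgt _
  · rw [show Eexp N L a lam c (fun i => x i + (q:ℤ) * t i)
        = Eexp N L a lam c x
          + (a * ((∑ i, grad N lam i * ((q:ℤ) * t i))
              + (L:ℤ) * ((∑ i, ∑ j, N i j * x i * ((q:ℤ) * t j)) + Fint N (fun i => (q:ℤ) * t i)))
            + ∑ i, c i * ((q:ℤ) * t i)) from
      Eexp_shift N hNsym hNeven L a lam c x (fun i => (q:ℤ) * t i)]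
    have hB : ∑ i, ∑ j, N i j * x i * ((q:ℤ) * t j) = (q:ℤ) * ∑ i, ∑ j, N i j * x i * t j := by
      rw [Finset.mul_sum]; apply Finset.sum_congr rfl; intro i _
      rw [Finset.mul_sum]; apply Finset.sum_congr rfl; intro j _
      ring
    have hF : Fint N (fun i => (q:ℤ) * t i) = (q:ℤ)^2 * Fint N t :=
      Fint_smul N hNsym hNeven (q:ℤ) t
    have hc : ∑ i, c i * ((q:ℤ) * t i) = (q:ℤ) * ∑ i, c i * t i := by
      rw [Finset.mul_sum]; apply Finset.sum_congr rfl; intros; ring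
    rw [hgqt, hB, hF, hc]
    set s : ℤ := a * ((∑ i, grad N lam i * t i)
        + (L:ℤ) * ((∑ i, ∑ j, N i j * x i * t j) + (q:ℤ) * Fint N t)) + ∑ i, c i * t i with hs
    rw [show a * ((q:ℤ) * ∑ i, grad N lam i * t i
          + (L:ℤ) * ((q:ℤ) * (∑ i, ∑ j, N i j * x i * t j) + (q:ℤ)^2 * Fint N t))
        + (q:ℤ) * ∑ i, c i * t i = (q:ℤ) * s by rw [hs]; ring]
    rw [eChar_int_add, eChar_qmul hq]
    have : eChar L (s : ℝ) = eChar L ((∑ i, c i * t i : ℤ) : ℝ) := by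
      apply eChar_int_congr hL
      rw [hs]
      simp only [add_sub_cancel_right]
      exact Dvd.dvd.mul_left (dvd_add hgt ⟨(∑ i, ∑ j, N i j * x i * t j) + (q:ℤ) * Fint N t, by ring⟩) a
    rw [this]
    ring

end Quad

namespace Quad

/-- Proposition 5.2 (lattice support condition): `S_{q,L,λ}(c) ≠ 0` forces
`c ≡ b·∇F(λ) mod L` for some integer `b`. -/
theorem Sq_support (n : ℕ) (hn : 2 ≤ n)
    (N : Matrix (Fin (n+1)) (Fin (n+1)) ℤ) (hNsym : N.IsSymm)
    (hNeven : ∀ i, Even (N i i)) (hNdet : N.det ≠ 0)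
    (L : ℕ) (hL : 0 < L)
    (lam : Fin (n+1) → ℤ) (hlam : (L : ℤ) ∣ Fint N lam) :
    ∀ q : ℕ, 0 < q → ∀ c : Fin (n+1) → ℤ,
      Sq n N q L lam c ≠ 0 →
      ∃ b : ℤ, ∀ i, (L : ℤ) ∣ (c i - b * grad N lam i) := by
  intro q hq c hS
  apply lattice_of_orth hL (grad N lam) c
  intro t hgt
  by_contra hct
  apply hS
  have hQ : 0 < q * L := Nat.mul_pos hq hL
  haveI : NeZero (q * L) := ⟨hQ.ne'⟩
  have hQZ : (0:ℤ) < ((q * L : ℕ) : ℤ) := by exact_mod_cast hQ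
  have hζ : eChar L ((∑ i, c i * t i : ℤ) : ℝ) ≠ 1 :=
    fun h => hct ((eChar_int_eq_one_iff hL _).mp h)
  have key : Sq n N q L lam c
      = eChar L ((∑ i, c i * t i : ℤ) : ℝ) * Sq n N q L lam c := by
    unfold Sq
    rw [Finset.mul_sum]
    refine Finset.sum_congr rfl (fun a _ => ?_)
    have hmod : ∀ i, 0 ≤ ((q:ℤ) * t i) % ((q*L : ℕ):ℤ)
        ∧ ((q:ℤ) * t i) % ((q*L:ℕ):ℤ) < ((q*L:ℕ):ℤ) :=
      fun i => ⟨Int.emod_nonneg _ hQZ.ne', Int.emod_lt_of_pos _ hQZ⟩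
    set τ : Fin (n+1) → Fin (q*L) := fun i =>
      ⟨(((q:ℤ) * t i) % ((q*L:ℕ):ℤ)).toNat, by have := hmod i; omega⟩ with hτdef
    have hτval : ∀ i, ((τ i : ℕ) : ℤ) = ((q:ℤ) * t i) % ((q*L:ℕ):ℤ) := fun i => by
      simp only [hτdef]
      exact Int.toNat_of_nonneg (hmod i).1
    simp only [Finset.sum_filter]
    suffices h : ∀ (F : (Fin (n+1) → Fin (q*L)) → ℂ),
        (∀ σ, F (σ + τ) = eChar L ((∑ i, c i * t i : ℤ) : ℝ) * F σ) →
        ∑ σ, F σ = eChar L ((∑ i, c i * t i : ℤ) : ℝ) * ∑ σ, F σ by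
      apply h
      intro σ
      set x : Fin (n+1) → ℤ := fun i => ((σ i : ℕ) : ℤ) with hxdef
      set y : Fin (n+1) → ℤ := fun i => (((σ + τ) i : ℕ) : ℤ) with hydef
      have hyz : ∀ i, ((q*L : ℕ):ℤ) ∣ y i - (x i + (q:ℤ) * t i) := by
        intro i
        have h1 : (((σ + τ) i : Fin (q*L)) : ℕ) = (((σ i : ℕ)) + ((τ i : ℕ))) % (q*L) :=
          Fin.val_add _ _
        have h2 : y i = (((σ i : ℕ):ℤ) + ((q:ℤ) * t i) % ((q*L:ℕ):ℤ)) % ((q*L:ℕ):ℤ) := by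
          have e1 : y i = ((((σ i : ℕ) + (τ i : ℕ)) % (q*L) : ℕ) : ℤ) := by
            rw [hydef]; dsimp only; rw [h1]
          rw [e1, ← hτval i]
          push_cast
          ring
        have hm1 : (((σ i : ℕ):ℤ) + ((q:ℤ) * t i) % ((q*L:ℕ):ℤ)) ≡ ((σ i : ℕ):ℤ) + (q:ℤ) * t i
            [ZMOD ((q*L:ℕ):ℤ)] :=
          Int.ModEq.add_left _ (Int.emod_emod_of_dvd _ dvd_rfl)
        have hm2 : y i ≡ ((σ i : ℕ):ℤ) + (q:ℤ) * t i [ZMOD ((q*L:ℕ):ℤ)] := by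
          rw [h2]
          exact (Int.emod_emod_of_dvd _ dvd_rfl).trans hm1
        exact hm2.symm.dvd
      have hcongr := Eexp_congr N hNsym hNeven L (q*L)
        ⟨(q:ℤ), by push_cast; ring⟩ ((a:ℕ):ℤ) lam c (fun i => x i + (q:ℤ) * t i) y hyz
      have hqt := Eexp_qt N hNsym hNeven L q hq hL ((a:ℕ):ℤ) lam c x t hgt
      have hiff : ((L:ℤ) ∣ Hpoly N L lam y) ↔ (L:ℤ) ∣ Hpoly N L lam x :=
        hcongr.1.trans hqt.1
      show (if (L:ℤ) ∣ Hpoly N L lam y then eChar (q*L) ((Eexp N L ((a:ℕ):ℤ) lam c y : ℤ) : ℝ) else 0)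
        = eChar L ((∑ i, c i * t i : ℤ) : ℝ) *
          (if (L:ℤ) ∣ Hpoly N L lam x then eChar (q*L) ((Eexp N L ((a:ℕ):ℤ) lam c x : ℤ) : ℝ) else 0)
      by_cases hP : (L:ℤ) ∣ Hpoly N L lam x
      · rw [if_pos (hiff.mpr hP), if_pos hP]
        have hEy : eChar (q*L) ((Eexp N L ((a:ℕ):ℤ) lam c y : ℤ) : ℝ)
            = eChar (q*L) ((Eexp N L ((a:ℕ):ℤ) lam c (fun i => x i + (q:ℤ) * t i) : ℤ) : ℝ) :=
          eChar_int_congr hQ hcongr.2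
        rw [hEy, hqt.2]
      · rw [if_neg (fun h => hP (hiff.mp h)), if_neg hP, mul_zero]
    · intro F hF
      calc ∑ σ, F σ = ∑ σ, F (Equiv.addRight τ σ) :=
            (Equiv.sum_comp (Equiv.addRight τ) F).symm
        _ = ∑ σ, eChar L ((∑ i, c i * t i : ℤ) : ℝ) * F σ := by
            refine Finset.sum_congr rfl (fun σ _ => ?_)
            rw [Equiv.coe_addRight]
            exact hF σ
        _ = eChar L ((∑ i, c i * t i : ℤ) : ℝ) * ∑ σ, F σ := by rw [Finset.mul_sum]
  have h0 : (1 - eChar L ((∑ i, c i * t i : ℤ) : ℝ)) * Sq n N q L lam c = 0 := by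
    linear_combination key
  rcases mul_eq_zero.mp h0 with h | h
  · exact absurd (sub_eq_zero.mp h).symm hζ
  · exact h

end Quad
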